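/- Let 𝓑 be a generalized Boolean algebra and for A ∈ 𝓑 let χ_A = 1_{Z(A)} ∈ C₀(𝓑̂) be the characteristic function of the cylinder set. Let 𝓐(𝓑) be the C*-subalgebra generated by {χ_A}. If 𝓘 is a closed ideal of 𝓐(𝓑), then 𝓘 = closed span of {χ_A : A ∈ 𝓑, χ_A ∈ 𝓘}. -/

import Mathlib

open scoped ZeroAtInfty
open Filter Topology

/-- The character space 𝓑̂ of a generalized Boolean algebra 𝓑: the space of ultrafilters
of 𝓑, realized as the nonzero Boolean characters 𝓑 → Bool, with the topology of
pointwise convergence. -/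
abbrev BoolCharSpace (B : Type*) [GeneralizedBooleanAlgebra B] : Type _ :=
  {φ : B → Bool // (∀ a b, φ (a ⊓ b) = (φ a && φ b)) ∧ (∀ a b, φ (a ⊔ b) = (φ a || φ b)) ∧
    (∀ a b, φ (a \ b) = (φ a && !φ b)) ∧ φ ⊥ = false ∧ ∃ a, φ a = true}

variable {B : Type*} [GeneralizedBooleanAlgebra B]

theorem isCompact_cylinder (A : B) :
    IsCompact {φ : BoolCharSpace B | φ.1 A = true} := by
  rw [Subtype.isCompact_iff]
  set K : Set (B → Bool) :=
    {φ | ((∀ a b, φ (a ⊓ b) = (φ a && φ b)) ∧ (∀ a b, φ (a ⊔ b) = (φ a || φ b)) ∧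
      (∀ a b, φ (a \ b) = (φ a && !φ b)) ∧ φ ⊥ = false) ∧ φ A = true} with hK
  have himg : Subtype.val '' {φ : BoolCharSpace B | φ.1 A = true} = K := by
    ext φ
    constructor
    · rintro ⟨ψ, hψ, rfl⟩
      exact ⟨⟨ψ.2.1, ψ.2.2.1, ψ.2.2.2.1, ψ.2.2.2.2.1⟩, hψ⟩
    · rintro ⟨⟨h1, h2, h3, h4⟩, h5⟩
      exact ⟨⟨φ, h1, h2, h3, h4, ⟨A, h5⟩⟩, h5, rfl⟩
  rw [himg]
  have c1 : IsClosed {φ : B → Bool | ∀ a b, φ (a ⊓ b) = (φ a && φ b)} := by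
    have he : {φ : B → Bool | ∀ a b, φ (a ⊓ b) = (φ a && φ b)} =
        ⋂ (a : B), ⋂ (b : B), {φ : B → Bool | φ (a ⊓ b) = (φ a && φ b)} := by
      ext φ; simp
    rw [he]
    refine isClosed_iInter fun a => isClosed_iInter fun b => ?_
    have hcont : Continuous ((fun p : Bool × Bool => p.1 && p.2) ∘ fun φ : B → Bool => (φ a, φ b)) :=
      Continuous.comp continuous_of_discreteTopology
        ((continuous_apply a).prodMk (continuous_apply b))
    exact isClosed_eq (continuous_apply _) hcont
  have c2 : IsClosed {φ : B → Bool | ∀ a b, φ (a ⊔ b) = (φ a || φ b)} := by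
    have he : {φ : B → Bool | ∀ a b, φ (a ⊔ b) = (φ a || φ b)} =
        ⋂ (a : B), ⋂ (b : B), {φ : B → Bool | φ (a ⊔ b) = (φ a || φ b)} := by
      ext φ; simp
    rw [he]
    refine isClosed_iInter fun a => isClosed_iInter fun b => ?_
    have hcont : Continuous ((fun p : Bool × Bool => p.1 || p.2) ∘ fun φ : B → Bool => (φ a, φ b)) :=
      Continuous.comp continuous_of_discreteTopology
        ((continuous_apply a).prodMk (continuous_apply b))
    exact isClosed_eq (continuous_apply _) hcont
  have c3 : IsClosed {φ : B → Bool | ∀ a b, φ (a \ b) = (φ a && !φ b)} := by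
    have he : {φ : B → Bool | ∀ a b, φ (a \ b) = (φ a && !φ b)} =
        ⋂ (a : B), ⋂ (b : B), {φ : B → Bool | φ (a \ b) = (φ a && !φ b)} := by
      ext φ; simp
    rw [he]
    refine isClosed_iInter fun a => isClosed_iInter fun b => ?_
    have hcont : Continuous ((fun p : Bool × Bool => p.1 && !p.2) ∘ fun φ : B → Bool => (φ a, φ b)) :=
      Continuous.comp continuous_of_discreteTopology
        ((continuous_apply a).prodMk (continuous_apply b))
    exact isClosed_eq (continuous_apply _) hcont
  have c4 : IsClosed {φ : B → Bool | φ ⊥ = false} :=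
    isClosed_eq (continuous_apply _) continuous_const
  have c5 : IsClosed {φ : B → Bool | φ A = true} :=
    isClosed_eq (continuous_apply _) continuous_const
  have hKeq : K = ({φ : B → Bool | ∀ a b, φ (a ⊓ b) = (φ a && φ b)} ∩
      {φ | ∀ a b, φ (a ⊔ b) = (φ a || φ b)} ∩ {φ | ∀ a b, φ (a \ b) = (φ a && !φ b)} ∩
      {φ | φ ⊥ = false}) ∩ {φ | φ A = true} := by
    ext φ
    simp only [hK, Set.mem_setOf_eq, Set.mem_inter_iff]
    tauto
  have hclosed : IsClosed K := by
    rw [hKeq]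
    exact ((((c1.inter c2).inter c3).inter c4)).inter c5
  exact hclosed.isCompact

/-- χ_A = 1_{Z(A)} ∈ C₀(𝓑̂): the characteristic function of the compact open
cylinder set Z(A) = {φ ∈ 𝓑̂ : φ(A) = 1}. -/
noncomputable def chi (A : B) : C₀(BoolCharSpace B, ℂ) where
  toFun φ := if φ.1 A then 1 else 0
  continuous_toFun :=
    (continuous_of_discreteTopology (f := fun t : Bool => if t then (1 : ℂ) else 0)).comp
      ((continuous_apply A).comp continuous_subtype_val)
  zero_at_infty' := by
    refine HasCompactSupport.is_zero_at_infty ?_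
    refine HasCompactSupport.intro (isCompact_cylinder A) ?_
    intro φ hφ
    simp only [Set.mem_setOf_eq] at hφ
    simp [hφ]

/-- 𝓐(𝓑): the C*-subalgebra of C₀(𝓑̂) generated by {χ_A : A ∈ 𝓑}
(equivalently, the closed linear span of {χ_A : A ∈ 𝓑}). -/
noncomputable def boolAlgebraOfChars (B : Type*) [GeneralizedBooleanAlgebra B] :
    Set C₀(BoolCharSpace B, ℂ) :=
  ((NonUnitalStarAlgebra.adjoin ℂ
    (Set.range (chi (B := B)))).topologicalClosure : Set C₀(BoolCharSpace B, ℂ))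

lemma chi_apply (A : B) (φ : BoolCharSpace B) : chi A φ = if φ.1 A then 1 else 0 := rfl

lemma chi_mul_chi (A A' : B) : chi A * chi A' = chi (A ⊓ A') := by
  ext φ
  simp only [ZeroAtInftyContinuousMap.coe_mul, Pi.mul_apply, chi_apply, φ.2.1]
  cases h : φ.1 A <;> cases h' : φ.1 A' <;> simp [h, h']

lemma star_chi (A : B) : star (chi A) = chi A := by
  ext φ
  simp only [ZeroAtInftyContinuousMap.coe_star, Pi.star_apply, chi_apply]
  split <;> simp

lemma chi_mem_alg (A : B) : chi A ∈ boolAlgebraOfChars B :=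
  (NonUnitalStarAlgebra.adjoin ℂ (Set.range (chi (B := B)))).le_topologicalClosure
    (NonUnitalStarAlgebra.subset_adjoin ℂ _ ⟨A, rfl⟩)

lemma norm_le_of_forall {f : C₀(BoolCharSpace B, ℂ)} {C : ℝ} (hC : 0 ≤ C)
    (h : ∀ φ, ‖f φ‖ ≤ C) : ‖f‖ ≤ C := by
  rw [← ZeroAtInftyContinuousMap.norm_toBCF_eq_norm]
  exact (BoundedContinuousFunction.norm_le hC).2 h

lemma pointwise_le_norm (f : C₀(BoolCharSpace B, ℂ)) (φ : BoolCharSpace B) : ‖f φ‖ ≤ ‖f‖ := by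
  rw [← ZeroAtInftyContinuousMap.norm_toBCF_eq_norm]
  exact BoundedContinuousFunction.norm_coe_le_norm f.toBCF φ

lemma c0_sum_apply {ι : Type*} (s : Finset ι) (F : ι → C₀(BoolCharSpace B, ℂ))
    (φ : BoolCharSpace B) : (∑ i ∈ s, F i) φ = ∑ i ∈ s, F i φ := by
  induction s using Finset.cons_induction with
  | empty => simp
  | cons a t ha ih =>
    rw [Finset.sum_cons, Finset.sum_cons, ZeroAtInftyContinuousMap.coe_add, Pi.add_apply, ih]

lemma mul_mem_span {x y : C₀(BoolCharSpace B, ℂ)}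
    (hx : x ∈ Submodule.span ℂ (Set.range (chi (B := B))))
    (hy : y ∈ Submodule.span ℂ (Set.range (chi (B := B)))) :
    x * y ∈ Submodule.span ℂ (Set.range (chi (B := B))) := by
  induction hx using Submodule.span_induction with
  | mem a ha =>
    induction hy using Submodule.span_induction with
    | mem b hb =>
      obtain ⟨A, rfl⟩ := ha; obtain ⟨A', rfl⟩ := hb
      exact Submodule.subset_span ⟨A ⊓ A', (chi_mul_chi A A').symm⟩
    | zero => rw [mul_zero]; exact zero_mem _
    | add b c _ _ hb hc => rw [mul_add]; exact add_mem hb hc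
    | smul r b _ hb => rw [mul_smul_comm]; exact Submodule.smul_mem _ _ hb
  | zero => rw [zero_mul]; exact zero_mem _
  | add a b _ _ ha hb => rw [add_mul]; exact add_mem ha hb
  | smul r a _ ha => rw [smul_mul_assoc]; exact Submodule.smul_mem _ _ ha

lemma star_mem_span {x : C₀(BoolCharSpace B, ℂ)}
    (hx : x ∈ Submodule.span ℂ (Set.range (chi (B := B)))) :
    star x ∈ Submodule.span ℂ (Set.range (chi (B := B))) := by
  induction hx using Submodule.span_induction with
  | mem a ha => obtain ⟨A, rfl⟩ := ha; rw [star_chi]; exact Submodule.subset_span ⟨A, rfl⟩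
  | zero => rw [star_zero]; exact zero_mem _
  | add a b _ _ ha hb => rw [star_add]; exact add_mem ha hb
  | smul r a _ ha => rw [star_smul]; exact Submodule.smul_mem _ _ ha

lemma alg_subset_closure_span :
    boolAlgebraOfChars B ⊆
      closure (Submodule.span ℂ (Set.range (chi (B := B))) : Set C₀(BoolCharSpace B, ℂ)) := by
  have h1 : (NonUnitalStarAlgebra.adjoin ℂ (Set.range (chi (B := B))) :
      Set C₀(BoolCharSpace B, ℂ)) ⊆
      (Submodule.span ℂ (Set.range (chi (B := B))) : Set C₀(BoolCharSpace B, ℂ)) := by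
    intro f hf
    induction hf using NonUnitalStarAlgebra.adjoin_induction with
    | mem x hx => exact Submodule.subset_span hx
    | add x y _ _ hx hy => exact add_mem hx hy
    | zero => exact zero_mem _
    | mul x y _ _ hx hy => exact mul_mem_span hx hy
    | smul r x _ hx => exact Submodule.smul_mem _ _ hx
    | star x _ hx => exact star_mem_span hx
  exact closure_mono h1

lemma char_sup {ι : Type*} (φ : BoolCharSpace B) (T : Finset ι) (v : ι → B) :
    φ.1 (T.sup v) = true ↔ ∃ i ∈ T, φ.1 (v i) = true := by
  induction T using Finset.cons_induction with
  | empty => simp [Finset.sup_empty, φ.2.2.2.2.1]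
  | cons a s ha ih =>
    rw [Finset.sup_cons, φ.2.2.1]
    simp [ih]

lemma char_inf' {ι : Type*} (φ : BoolCharSpace B) (T : Finset ι) (hT : T.Nonempty) (v : ι → B) :
    φ.1 (T.inf' hT v) = true ↔ ∀ i ∈ T, φ.1 (v i) = true := by
  induction hT using Finset.Nonempty.cons_induction with
  | singleton a => simp
  | cons a s ha hs ih =>
    rw [Finset.inf'_cons, φ.2.1]
    simp_all
    exact hs

noncomputable def cellOf {n : ℕ} (b : Fin n → B) (S : Finset (Fin n)) : B :=
  if h : S.Nonempty then (S.inf' h b) \ (Sᶜ.sup b) else ⊥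

lemma char_cellOf {n : ℕ} (φ : BoolCharSpace B) (b : Fin n → B) (S : Finset (Fin n)) :
    φ.1 (cellOf b S) = true ↔
      S = Finset.univ.filter (fun i => φ.1 (b i) = true) ∧ S.Nonempty := by
  by_cases h : S.Nonempty
  · rw [cellOf, dif_pos h, φ.2.2.2.1]
    simp only [Bool.and_eq_true, Bool.not_eq_true', char_inf' φ S h b]
    constructor
    · rintro ⟨h1, h2⟩
      refine ⟨Finset.ext fun i => ?_, h⟩
      simp only [Finset.mem_filter, Finset.mem_univ, true_and]
      constructor
      · intro hi; exact h1 i hi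
      · intro hi
        by_contra hni
        have : φ.1 (Sᶜ.sup b) = true := (char_sup φ Sᶜ b).2 ⟨i, Finset.mem_compl.2 hni, hi⟩
        rw [h2] at this; exact Bool.false_ne_true this
    · rintro ⟨rfl, -⟩
      refine ⟨fun i hi => (Finset.mem_filter.1 hi).2, ?_⟩
      rw [← Bool.not_eq_true, char_sup φ _ b]
      rintro ⟨i, hi, hbi⟩
      exact (Finset.mem_compl.1 hi) (Finset.mem_filter.2 ⟨Finset.mem_univ i, hbi⟩)
  · rw [cellOf, dif_neg h, φ.2.2.2.2.1]
    simp [h]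

lemma chi_mem_ideal (I : Set C₀(BoolCharSpace B, ℂ))
    (hsub : I ⊆ boolAlgebraOfChars B)
    (hclosed : IsClosed I)
    (hadd : ∀ f ∈ I, ∀ g ∈ I, f + g ∈ I)
    (hsmul : ∀ c : ℂ, ∀ f ∈ I, c • f ∈ I)
    (hmul : ∀ f ∈ I, ∀ g ∈ boolAlgebraOfChars B, f * g ∈ I)
    (f : C₀(BoolCharSpace B, ℂ)) (hf : f ∈ I) (A : B) (d : ℂ) (r : ℝ)
    (hr : 0 ≤ r) (hrd : r < ‖d‖)
    (hclose : ∀ φ : BoolCharSpace B, φ.1 A = true → ‖f φ - d‖ ≤ r) :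
    chi A ∈ I := by
  have hd0 : 0 < ‖d‖ := lt_of_le_of_lt hr hrd
  have hd : d ≠ 0 := by simpa using hd0.ne'
  set x : C₀(BoolCharSpace B, ℂ) := f * chi A with hxdef
  have hxI : x ∈ I := hmul f hf _ (chi_mem_alg A)
  set y : ℕ → C₀(BoolCharSpace B, ℂ) :=
    fun n => Nat.rec (d⁻¹ • x) (fun _ yn => yn + d⁻¹ • x + (-d⁻¹) • (x * yn)) n with hy
  have hy0 : y 0 = d⁻¹ • x := rfl
  have hystep : ∀ n, y (n + 1) = y n + d⁻¹ • x + (-d⁻¹) • (x * y n) := fun n => rfl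
  have hyI : ∀ n, y n ∈ I := by
    intro n
    induction n with
    | zero => exact hsmul _ _ hxI
    | succ n ih =>
      rw [hystep]
      exact hadd _ (hadd _ ih _ (hsmul _ _ hxI)) _ (hsmul _ _ (hmul _ hxI _ (hsub ih)))
  have hxoff : ∀ φ : BoolCharSpace B, φ.1 A = false → x φ = 0 := by
    intro φ hφ
    simp [hxdef, chi_apply, hφ]
  have hxon : ∀ φ : BoolCharSpace B, φ.1 A = true → x φ = f φ := by
    intro φ hφ
    simp [hxdef, chi_apply, hφ]
  have hoff : ∀ n, ∀ φ : BoolCharSpace B, φ.1 A = false → y n φ = 0 := by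
    intro n
    induction n with
    | zero => intro φ hφ; simp [hy0, hxoff φ hφ]
    | succ n ih =>
      intro φ hφ
      rw [hystep]
      simp [ih φ hφ, hxoff φ hφ]
  have hon : ∀ n, ∀ φ : BoolCharSpace B, φ.1 A = true →
      ‖1 - y n φ‖ ≤ (r / ‖d‖) ^ (n + 1) := by
    intro n
    induction n with
    | zero =>
      intro φ hφ
      have : (1 : ℂ) - y 0 φ = d⁻¹ * (d - f φ) := by
        rw [hy0]
        simp only [ZeroAtInftyContinuousMap.coe_smul, Pi.smul_apply, smul_eq_mul, hxon φ hφ]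
        field_simp
      rw [this, pow_one, norm_mul, norm_inv, div_eq_inv_mul]
      gcongr
      rw [norm_sub_rev]
      exact hclose φ hφ
    | succ n ih =>
      intro φ hφ
      have key : (1 : ℂ) - y (n+1) φ = (1 - y n φ) * (d⁻¹ * (d - f φ)) := by
        rw [hystep]
        simp only [ZeroAtInftyContinuousMap.coe_add, ZeroAtInftyContinuousMap.coe_smul,
          ZeroAtInftyContinuousMap.coe_mul, Pi.add_apply, Pi.smul_apply, Pi.mul_apply,
          smul_eq_mul, hxon φ hφ]
        field_simp
        ring
      rw [key, pow_succ, norm_mul]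
      have h2 : ‖d⁻¹ * (d - f φ)‖ ≤ r / ‖d‖ := by
        rw [norm_mul, norm_inv, div_eq_inv_mul]
        gcongr
        rw [norm_sub_rev]
        exact hclose φ hφ
      exact mul_le_mul (ih φ hφ) h2 (norm_nonneg _) (by positivity)
  have hnorm : ∀ n, ‖chi A - y n‖ ≤ (r / ‖d‖) ^ (n + 1) := by
    intro n
    refine norm_le_of_forall (by positivity) fun φ => ?_
    rw [ZeroAtInftyContinuousMap.coe_sub, Pi.sub_apply]
    cases hφ : φ.1 A with
    | false => simp [chi_apply, hφ, hoff n φ hφ]; positivity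
    | true => simpa [chi_apply, hφ] using hon n φ hφ
  have hratio : r / ‖d‖ < 1 := (div_lt_one hd0).2 hrd
  have hlim : Tendsto y atTop (𝓝 (chi A)) := by
    rw [tendsto_iff_dist_tendsto_zero]
    refine squeeze_zero (g := fun n => (r / ‖d‖) ^ (n + 1)) (fun n => dist_nonneg)
      (fun n => ?_) ?_
    · rw [dist_eq_norm, norm_sub_rev]; exact hnorm n
    · have h0 : Tendsto (fun n : ℕ => (r / ‖d‖) ^ n) atTop (𝓝 0) :=
        tendsto_pow_atTop_nhds_zero_of_lt_one (by positivity) hratio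
      exact h0.comp (tendsto_add_atTop_nat 1)
  exact hclosed.mem_of_tendsto hlim (Filter.Eventually.of_forall hyI)


/-- If 𝓘 is a closed ideal of 𝓐(𝓑), then
𝓘 = closed span of {χ_A : A ∈ 𝓑, χ_A ∈ 𝓘}. -/
theorem closed_ideal_is_span_of_chis {B : Type*} [GeneralizedBooleanAlgebra B]
    (I : Set C₀(BoolCharSpace B, ℂ))
    (hsub : I ⊆ boolAlgebraOfChars B)
    (hclosed : IsClosed I)
    (hzero : (0 : C₀(BoolCharSpace B, ℂ)) ∈ I)
    (hadd : ∀ f ∈ I, ∀ g ∈ I, f + g ∈ I)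
    (hsmul : ∀ c : ℂ, ∀ f ∈ I, c • f ∈ I)
    (hmul : ∀ f ∈ I, ∀ g ∈ boolAlgebraOfChars B, f * g ∈ I ∧ g * f ∈ I) :
    I = closure (Submodule.span ℂ {f : C₀(BoolCharSpace B, ℂ) | ∃ A : B, f = chi A ∧ f ∈ I}
      : Set C₀(BoolCharSpace B, ℂ)) := by
  have hmul' : ∀ f ∈ I, ∀ g ∈ boolAlgebraOfChars B, f * g ∈ I :=
    fun f hf g hg => (hmul f hf g hg).1
  apply Set.Subset.antisymm
  · -- hard direction
    intro f hf
    rw [Metric.mem_closure_iff]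
    intro ε hε
    -- approximate f by an element of the span of the chis
    have hfc : f ∈ closure (Submodule.span ℂ (Set.range (chi (B := B))) :
        Set C₀(BoolCharSpace B, ℂ)) := alg_subset_closure_span (hsub hf)
    rw [Metric.mem_closure_iff] at hfc
    obtain ⟨g, hg, hfg⟩ := hfc (ε / 3) (by positivity)
    rw [SetLike.mem_coe, Submodule.mem_span_set'] at hg
    obtain ⟨n, c, v, hgsum⟩ := hg
    choose b hb using fun i => (v i).2
    have hgsum' : g = ∑ i, c i • chi (b i) := by
      rw [← hgsum]
      exact Finset.sum_congr rfl fun i _ => by rw [hb i]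
    -- set-up
    classical
    set Sφ : BoolCharSpace B → Finset (Fin n) :=
      fun φ => Finset.univ.filter (fun i => φ.1 (b i) = true) with hSφ
    set d : Finset (Fin n) → ℂ := fun S => ∑ i ∈ S, c i with hd
    have hgval : ∀ φ, g φ = d (Sφ φ) := by
      intro φ
      rw [hgsum']
      have : (∑ i, c i • chi (b i)) φ = ∑ i, c i * chi (b i) φ := by
        rw [c0_sum_apply]
        exact Finset.sum_congr rfl fun i _ => by
          rw [ZeroAtInftyContinuousMap.coe_smul, Pi.smul_apply, smul_eq_mul]
      rw [this, hd, hSφ]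
      simp only [Finset.sum_filter, chi_apply]
      refine Finset.sum_congr rfl fun i _ => ?_
      by_cases h : φ.1 (b i) = true <;> simp [h]
    set 𝒮 : Finset (Finset (Fin n)) :=
      Finset.univ.filter (fun S => 2 * ε / 3 < ‖d S‖) with h𝒮
    set h : C₀(BoolCharSpace B, ℂ) := ∑ S ∈ 𝒮, d S • chi (cellOf b S) with hh
    -- each relevant chi is in I
    have hchiI : ∀ S ∈ 𝒮, chi (cellOf b S) ∈ I := by
      intro S hS
      have hdS : 2 * ε / 3 < ‖d S‖ := (Finset.mem_filter.1 hS).2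
      refine chi_mem_ideal I hsub hclosed hadd hsmul hmul' f hf _ (d S) (dist f g)
        dist_nonneg (lt_of_lt_of_le (lt_of_lt_of_le hfg (by linarith)) (le_of_lt hdS)) ?_
      intro φ hφ
      obtain ⟨rfl, -⟩ := (char_cellOf φ b S).1 hφ
      rw [← hgval φ]
      calc ‖f φ - g φ‖ = ‖(f - g) φ‖ := by
            rw [ZeroAtInftyContinuousMap.coe_sub, Pi.sub_apply]
        _ ≤ ‖f - g‖ := pointwise_le_norm _ _
        _ = dist f g := (dist_eq_norm f g).symm
    -- h belongs to the span
    have hhspan : h ∈ (Submodule.span ℂ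
        {f : C₀(BoolCharSpace B, ℂ) | ∃ A : B, f = chi A ∧ f ∈ I} :
        Set C₀(BoolCharSpace B, ℂ)) := by
      rw [hh, SetLike.mem_coe]
      refine Submodule.sum_mem _ fun S hS => Submodule.smul_mem _ _ ?_
      exact Submodule.subset_span ⟨cellOf b S, rfl, hchiI S hS⟩
    -- pointwise estimate on g - h
    have hgh : ∀ φ, ‖g φ - h φ‖ ≤ 2 * ε / 3 := by
      intro φ
      have hhval : h φ = ∑ S ∈ 𝒮, d S * chi (cellOf b S) φ := by
        rw [hh, c0_sum_apply]
        exact Finset.sum_congr rfl fun S _ => by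
          rw [ZeroAtInftyContinuousMap.coe_smul, Pi.smul_apply, smul_eq_mul]
      have hchival : ∀ S, chi (cellOf b S) φ =
          if S = Sφ φ ∧ S.Nonempty then 1 else 0 := by
        intro S
        rw [chi_apply]
        by_cases hc : S = Sφ φ ∧ S.Nonempty
        · rw [if_pos ((char_cellOf φ b S).2 hc), if_pos hc]
        · rw [if_neg, if_neg hc]
          rw [char_cellOf φ b S]
          simpa using hc
      by_cases hmem : Sφ φ ∈ 𝒮 ∧ (Sφ φ).Nonempty
      · have : h φ = d (Sφ φ) := by
          rw [hhval, Finset.sum_eq_single_of_mem (Sφ φ) hmem.1]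
          · rw [hchival, if_pos ⟨rfl, hmem.2⟩, mul_one]
          · intro S hS hne
            rw [hchival, if_neg (fun hc => hne hc.1), mul_zero]
        rw [this, hgval φ, sub_self, norm_zero]
        positivity
      · have hzeroh : h φ = 0 := by
          rw [hhval]
          refine Finset.sum_eq_zero fun S hS => ?_
          rw [hchival, if_neg, mul_zero]
          rintro ⟨rfl, hne⟩
          exact hmem ⟨hS, hne⟩
        rw [hzeroh, sub_zero, hgval φ]
        by_cases hne : (Sφ φ).Nonempty
        · have : Sφ φ ∉ 𝒮 := fun hc => hmem ⟨hc, hne⟩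
          rw [h𝒮] at this
          simp only [Finset.mem_filter, Finset.mem_univ, true_and, not_lt] at this
          exact this
        · rw [Finset.not_nonempty_iff_eq_empty] at hne
          simp only [hd, hne, Finset.sum_empty, norm_zero]
          positivity
    -- final estimate
    refine ⟨h, hhspan, ?_⟩
    have hdistfh : dist f h ≤ dist f g + 2 * ε / 3 := by
      rw [dist_eq_norm]
      refine norm_le_of_forall (by positivity) fun φ => ?_
      rw [ZeroAtInftyContinuousMap.coe_sub, Pi.sub_apply]
      calc ‖f φ - h φ‖ ≤ ‖f φ - g φ‖ + ‖g φ - h φ‖ := by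
            have : f φ - h φ = (f φ - g φ) + (g φ - h φ) := by ring
            rw [this]; exact norm_add_le _ _
        _ ≤ dist f g + 2 * ε / 3 := by
            refine add_le_add ?_ (hgh φ)
            calc ‖f φ - g φ‖ = ‖(f - g) φ‖ := by
                  rw [ZeroAtInftyContinuousMap.coe_sub, Pi.sub_apply]
              _ ≤ ‖f - g‖ := pointwise_le_norm _ _
              _ = dist f g := (dist_eq_norm f g).symm
    calc dist f h ≤ dist f g + 2 * ε / 3 := hdistfh
      _ < ε / 3 + 2 * ε / 3 := by linarith
      _ = ε := by ring
  · -- easy direction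
    have hIs : (Submodule.span ℂ {f : C₀(BoolCharSpace B, ℂ) | ∃ A : B, f = chi A ∧ f ∈ I} :
        Set C₀(BoolCharSpace B, ℂ)) ⊆ I := by
      intro f hf
      rw [SetLike.mem_coe] at hf
      induction hf using Submodule.span_induction with
      | mem x hx => obtain ⟨A, -, hx⟩ := hx; exact hx
      | zero => exact hzero
      | add x y _ _ hx hy => exact hadd x hx y hy
      | smul r x _ hx => exact hsmul r x hx
    exact closure_minimal hIs hclosed
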